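/- arXiv:2205.07848 — 2 statements merged into one kernel-verified Lean document; each statement's English description precedes it below -/
import Mathlib

section
/- Let U = R_Z(φ) W(θ₀, φ₀) · ∏_{j=1}^{L} R_Z(x) W(θ_j, φ_j), where W(θ, φ) = R_Y(θ) R_Z(φ). Then U has the form [[P(x), -Q(x)], [Q*(x), P*(x)]] where P and Q are Laurent polynomials in e^{ix/2} with complex coefficients satisfying deg(P) ≤ L, deg(Q) ≤ L, both have parity L mod 2, and |P(x)|² + |Q(x)|² = 1 for all real x. -/
open Complex Matrix

noncomputable def RZ (x : ℝ) : Matrix (Fin 2) (Fin 2) ℂ :=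
  !![Complex.exp (-(Complex.I * x) / 2), 0; 0, Complex.exp (Complex.I * x / 2)]

noncomputable def RY (θ : ℝ) : Matrix (Fin 2) (Fin 2) ℂ :=
  !![(Real.cos (θ / 2) : ℂ), -(Real.sin (θ / 2) : ℂ);
     (Real.sin (θ / 2) : ℂ), (Real.cos (θ / 2) : ℂ)]

noncomputable def W (θ φ : ℝ) : Matrix (Fin 2) (Fin 2) ℂ := RY θ * RZ φ

noncomputable def Fa (L : ℕ) (p : ℤ → ℂ) (x : ℝ) : ℂ :=
  ∑ n ∈ Finset.Icc (-(L : ℤ)) (L : ℤ), p n * Complex.exp (Complex.I * (n : ℂ) * (x : ℂ) / 2)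

lemma Fa_shift (L : ℕ) (k : ℤ) (hk : k = 1 ∨ k = -1) (p : ℤ → ℂ)
    (hp : ∀ n : ℤ, (L : ℤ) < |n| → p n = 0) (x : ℝ) :
    (∑ n ∈ Finset.Icc (-(L + 1 : ℤ)) (L + 1 : ℤ),
        p (n + k) * Complex.exp (Complex.I * (n : ℂ) * (x : ℂ) / 2))
      = Fa L p x * Complex.exp (-(Complex.I * k * x) / 2) := by
  have h1 : (∑ n ∈ Finset.Icc (-(L + 1 : ℤ)) (L + 1 : ℤ),
      p (n + k) * Complex.exp (Complex.I * (n : ℂ) * (x : ℂ) / 2))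
      = ∑ m ∈ Finset.Icc (-(L + 1 : ℤ) + k) ((L + 1 : ℤ) + k),
        p m * Complex.exp (Complex.I * ((m : ℂ) - (k : ℂ)) * (x : ℂ) / 2) := by
    rw [← Finset.map_add_right_Icc, Finset.sum_map]
    apply Finset.sum_congr rfl
    intro n _
    simp only [addRightEmbedding_apply]
    push_cast
    ring_nf
  rw [h1]
  have h2 : ∑ m ∈ Finset.Icc (-(L + 1 : ℤ) + k) ((L + 1 : ℤ) + k),
      p m * Complex.exp (Complex.I * ((m : ℂ) - (k : ℂ)) * (x : ℂ) / 2)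
      = ∑ m ∈ Finset.Icc (-(L : ℤ)) (L : ℤ),
        p m * Complex.exp (Complex.I * ((m : ℂ) - (k : ℂ)) * (x : ℂ) / 2) := by
    symm
    apply Finset.sum_subset (Finset.Icc_subset_Icc (by rcases hk with rfl | rfl <;> omega)
      (by rcases hk with rfl | rfl <;> omega))
    intro m hm hm'
    simp only [Finset.mem_Icc, not_and_or, not_le] at hm hm'
    rw [hp m (by rw [lt_abs]; rcases hk with rfl | rfl <;> omega), zero_mul]
  rw [h2, Fa, Finset.sum_mul]
  refine Finset.sum_congr rfl fun m _ => ?_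
  have he : Complex.exp (Complex.I * ((m : ℂ) - (k : ℂ)) * (x : ℂ) / 2)
      = Complex.exp (Complex.I * (m : ℂ) * (x : ℂ) / 2) *
        Complex.exp (-(Complex.I * (k : ℂ) * (x : ℂ)) / 2) := by
    rw [← Complex.exp_add]; congr 1; ring
  rw [he]; ring

lemma conj_exp_I (t : ℝ) :
    (starRingEnd ℂ) (Complex.exp (Complex.I * (t : ℂ) / 2)) =
      Complex.exp (-(Complex.I * (t : ℂ)) / 2) := by
  rw [← Complex.exp_conj]
  congr 1
  simp [map_div₀, map_ofNat]

lemma conj_exp_I' (t : ℝ) :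
    (starRingEnd ℂ) (Complex.exp (-(Complex.I * (t : ℂ)) / 2)) =
      Complex.exp (Complex.I * (t : ℂ) / 2) := by
  rw [← Complex.exp_conj]
  congr 1
  simp [map_div₀, map_ofNat]

lemma RZ_mul_W (x t f : ℝ) : RZ x * W t f =
    !![Complex.exp (-(Complex.I * x) / 2) * ((Real.cos (t / 2) : ℂ) *
         Complex.exp (-(Complex.I * f) / 2)),
       Complex.exp (-(Complex.I * x) / 2) * (-((Real.sin (t / 2) : ℂ) *
         Complex.exp (Complex.I * f / 2)));
       Complex.exp (Complex.I * x / 2) * ((Real.sin (t / 2) : ℂ) *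
         Complex.exp (-(Complex.I * f) / 2)),
       Complex.exp (Complex.I * x / 2) * ((Real.cos (t / 2) : ℂ) *
         Complex.exp (Complex.I * f / 2))] := by
  simp [RZ, W, RY, Matrix.mul_fin_two]

lemma key : ∀ (L : ℕ) (θ φ : Fin L → ℝ) (a b : ℂ),
    ∃ p q : ℤ → ℂ,
      (∀ n : ℤ, (L : ℤ) < |n| → p n = 0) ∧
      (∀ n : ℤ, (L : ℤ) < |n| → q n = 0) ∧
      (∀ n : ℤ, n % 2 ≠ (L : ℤ) % 2 → p n = 0) ∧
      (∀ n : ℤ, n % 2 ≠ (L : ℤ) % 2 → q n = 0) ∧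
      ∀ x : ℝ,
        !![a, -b; (starRingEnd ℂ) b, (starRingEnd ℂ) a] *
            (List.ofFn fun j : Fin L => RZ x * W (θ j) (φ j)).prod =
          !![Fa L p x, -(Fa L q x);
             (starRingEnd ℂ) (Fa L q x), (starRingEnd ℂ) (Fa L p x)] := by
  intro L
  induction L with
  | zero =>
    intro θ φ a b
    refine ⟨fun n => if n = 0 then a else 0, fun n => if n = 0 then b else 0,
      fun n hn => by simp at hn ⊢; omega,
      fun n hn => by simp at hn ⊢; omega,
      fun n hn => by simp at hn ⊢; omega,
      fun n hn => by simp at hn ⊢; omega, fun x => ?_⟩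
    simp [Fa]
  | succ L ih =>
    intro θ φ a b
    obtain ⟨p, q, hp1, hq1, hp2, hq2, hU⟩ :=
      ih (θ ∘ Fin.castSucc) (φ ∘ Fin.castSucc) a b
    set c : ℂ := (Real.cos (θ (Fin.last L) / 2) : ℂ) with hc
    set s : ℂ := (Real.sin (θ (Fin.last L) / 2) : ℂ) with hs
    set e : ℂ := Complex.exp (-(Complex.I * (φ (Fin.last L) : ℂ)) / 2) with he
    set e' : ℂ := Complex.exp (Complex.I * (φ (Fin.last L) : ℂ) / 2) with he'
    refine ⟨fun n => e * (c * p (n + 1) - s * q (n + -1)),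
      fun n => e' * (s * p (n + 1) + c * q (n + -1)), ?_, ?_, ?_, ?_, ?_⟩
    · intro n hn
      have h1 : p (n + 1) = 0 := hp1 _ (by rw [lt_abs] at hn ⊢; push_cast at hn ⊢; omega)
      have h2 : q (n + -1) = 0 := hq1 _ (by rw [lt_abs] at hn ⊢; push_cast at hn ⊢; omega)
      simp [h1, h2]
    · intro n hn
      have h1 : p (n + 1) = 0 := hp1 _ (by rw [lt_abs] at hn ⊢; push_cast at hn ⊢; omega)
      have h2 : q (n + -1) = 0 := hq1 _ (by rw [lt_abs] at hn ⊢; push_cast at hn ⊢; omega)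
      simp [h1, h2]
    · intro n hn
      have h1 : p (n + 1) = 0 := hp2 _ (by push_cast at hn ⊢; omega)
      have h2 : q (n + -1) = 0 := hq2 _ (by push_cast at hn ⊢; omega)
      simp [h1, h2]
    · intro n hn
      have h1 : p (n + 1) = 0 := hp2 _ (by push_cast at hn ⊢; omega)
      have h2 : q (n + -1) = 0 := hq2 _ (by push_cast at hn ⊢; omega)
      simp [h1, h2]
    · intro x
      set u : ℂ := Complex.exp (-(Complex.I * (x : ℂ)) / 2) with hu
      set v : ℂ := Complex.exp (Complex.I * (x : ℂ) / 2) with hv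
      have hshift1 : ∀ r : ℤ → ℂ, (∀ n : ℤ, (L : ℤ) < |n| → r n = 0) →
          (∑ n ∈ Finset.Icc (-((L : ℤ) + 1)) ((L : ℤ) + 1),
            r (n + 1) * Complex.exp (Complex.I * (n : ℂ) * (x : ℂ) / 2))
            = Fa L r x * u := by
        intro r hr
        have h := Fa_shift L 1 (Or.inl rfl) r hr x
        rw [h]
        norm_num [hu]
      have hshift2 : ∀ r : ℤ → ℂ, (∀ n : ℤ, (L : ℤ) < |n| → r n = 0) →
          (∑ n ∈ Finset.Icc (-((L : ℤ) + 1)) ((L : ℤ) + 1),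
            r (n + -1) * Complex.exp (Complex.I * (n : ℂ) * (x : ℂ) / 2))
            = Fa L r x * v := by
        intro r hr
        have h := Fa_shift L (-1) (Or.inr rfl) r hr x
        rw [h, hv]
        congr 1
        push_cast
        ring_nf
      have hP : Fa (L + 1) (fun n => e * (c * p (n + 1) - s * q (n + -1))) x
          = e * (c * (Fa L p x * u) - s * (Fa L q x * v)) := by
        have e1 : ∀ n ∈ Finset.Icc (-((L : ℤ) + 1)) ((L : ℤ) + 1),
            e * (c * p (n + 1) - s * q (n + -1)) *
              Complex.exp (Complex.I * (n : ℂ) * (x : ℂ) / 2)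
            = e * c * (p (n + 1) * Complex.exp (Complex.I * (n : ℂ) * (x : ℂ) / 2))
              - e * s * (q (n + -1) * Complex.exp (Complex.I * (n : ℂ) * (x : ℂ) / 2)) :=
          fun n _ => by ring
        rw [Fa]
        push_cast
        beta_reduce
        rw [Finset.sum_congr rfl e1, Finset.sum_sub_distrib, ← Finset.mul_sum, ← Finset.mul_sum,
          hshift1 p hp1, hshift2 q hq1]
        ring
      have hQ : Fa (L + 1) (fun n => e' * (s * p (n + 1) + c * q (n + -1))) x
          = e' * (s * (Fa L p x * u) + c * (Fa L q x * v)) := by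
        have e1 : ∀ n ∈ Finset.Icc (-((L : ℤ) + 1)) ((L : ℤ) + 1),
            e' * (s * p (n + 1) + c * q (n + -1)) *
              Complex.exp (Complex.I * (n : ℂ) * (x : ℂ) / 2)
            = e' * s * (p (n + 1) * Complex.exp (Complex.I * (n : ℂ) * (x : ℂ) / 2))
              + e' * c * (q (n + -1) * Complex.exp (Complex.I * (n : ℂ) * (x : ℂ) / 2)) :=
          fun n _ => by ring
        rw [Fa]
        push_cast
        beta_reduce
        rw [Finset.sum_congr rfl e1, Finset.sum_add_distrib, ← Finset.mul_sum, ← Finset.mul_sum,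
          hshift1 p hp1, hshift2 q hq1]
        ring
      have hlist : (List.ofFn fun j : Fin (L + 1) => RZ x * W (θ j) (φ j)).prod
          = (List.ofFn fun j : Fin L =>
              RZ x * W ((θ ∘ Fin.castSucc) j) ((φ ∘ Fin.castSucc) j)).prod *
            (RZ x * W (θ (Fin.last L)) (φ (Fin.last L))) := by
        rw [List.ofFn_succ']
        simp [Function.comp]
      have hcu : (starRingEnd ℂ) u = v := by rw [hu, hv, conj_exp_I']
      have hcv : (starRingEnd ℂ) v = u := by rw [hu, hv, conj_exp_I]
      have hce : (starRingEnd ℂ) e' = e := by rw [he, he', conj_exp_I]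
      have hce' : (starRingEnd ℂ) e = e' := by rw [he, he', conj_exp_I']
      have hcc : (starRingEnd ℂ) c = c := Complex.conj_ofReal _
      have hcs : (starRingEnd ℂ) s = s := Complex.conj_ofReal _
      have hPc : (starRingEnd ℂ) (Fa (L + 1) (fun n => e * (c * p (n + 1) - s * q (n + -1))) x)
          = e' * (c * ((starRingEnd ℂ) (Fa L p x) * v)
              - s * ((starRingEnd ℂ) (Fa L q x) * u)) := by
        rw [hP, _root_.map_mul, map_sub, _root_.map_mul, _root_.map_mul, _root_.map_mul, _root_.map_mul,
          hce', hcc, hcs, hcu, hcv]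
      have hQc : (starRingEnd ℂ) (Fa (L + 1) (fun n => e' * (s * p (n + 1) + c * q (n + -1))) x)
          = e * (s * ((starRingEnd ℂ) (Fa L p x) * v)
              + c * ((starRingEnd ℂ) (Fa L q x) * u)) := by
        rw [hQ, _root_.map_mul, map_add, _root_.map_mul, _root_.map_mul, _root_.map_mul, _root_.map_mul,
          hce, hcc, hcs, hcu, hcv]
      rw [hlist, ← mul_assoc, hU x, RZ_mul_W, ← hc, ← hs, ← he, ← he', ← hu, ← hv,
        Matrix.mul_fin_two]
      ext i j
      fin_cases i <;> fin_cases j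
      · show _ = Fa (L + 1) (fun n => e * (c * p (n + 1) - s * q (n + -1))) x
        simp only [Fin.mk_zero, Fin.mk_one, Matrix.of_apply, Matrix.cons_val', Matrix.cons_val_zero, Matrix.empty_val',
          Matrix.cons_val_fin_one, Matrix.cons_val_one, Matrix.head_cons, Matrix.head_fin_const]
        rw [hP]; ring
      · show _ = -Fa (L + 1) (fun n => e' * (s * p (n + 1) + c * q (n + -1))) x
        simp only [Fin.mk_zero, Fin.mk_one, Matrix.of_apply, Matrix.cons_val', Matrix.cons_val_zero, Matrix.empty_val',
          Matrix.cons_val_fin_one, Matrix.cons_val_one, Matrix.head_cons, Matrix.head_fin_const]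
        rw [hQ]; ring
      · show _ = (starRingEnd ℂ) (Fa (L + 1) (fun n => e' * (s * p (n + 1) + c * q (n + -1))) x)
        simp only [Fin.mk_zero, Fin.mk_one, Matrix.of_apply, Matrix.cons_val', Matrix.cons_val_zero, Matrix.empty_val',
          Matrix.cons_val_fin_one, Matrix.cons_val_one, Matrix.head_cons, Matrix.head_fin_const]
        rw [hQc]; ring
      · show _ = (starRingEnd ℂ) (Fa (L + 1) (fun n => e * (c * p (n + 1) - s * q (n + -1))) x)
        simp only [Fin.mk_zero, Fin.mk_one, Matrix.of_apply, Matrix.cons_val', Matrix.cons_val_zero, Matrix.empty_val',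
          Matrix.cons_val_fin_one, Matrix.cons_val_one, Matrix.head_cons, Matrix.head_fin_const]
        rw [hPc]; ring

lemma det_RZ (t : ℝ) : (RZ t).det = 1 := by
  rw [RZ, Matrix.det_fin_two_of]
  rw [mul_zero, sub_zero, ← Complex.exp_add,
    show -(Complex.I * (t : ℂ)) / 2 + Complex.I * (t : ℂ) / 2 = 0 by ring, Complex.exp_zero]

lemma det_W (t f : ℝ) : (W t f).det = 1 := by
  rw [W, Matrix.det_mul, det_RZ, mul_one, RY, Matrix.det_fin_two_of]
  have h := Real.sin_sq_add_cos_sq (t / 2)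
  norm_cast
  nlinarith [h]

lemma baseA (fb t f : ℝ) : RZ fb * W t f =
    !![(Real.cos (t / 2) : ℂ) * Complex.exp (-(Complex.I * ((fb + f : ℝ) : ℂ)) / 2),
       -((Real.sin (t / 2) : ℂ) * Complex.exp (Complex.I * ((f - fb : ℝ) : ℂ) / 2));
       (starRingEnd ℂ) ((Real.sin (t / 2) : ℂ) *
         Complex.exp (Complex.I * ((f - fb : ℝ) : ℂ) / 2)),
       (starRingEnd ℂ) ((Real.cos (t / 2) : ℂ) *
         Complex.exp (-(Complex.I * ((fb + f : ℝ) : ℂ)) / 2))] := by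
  have hca : (starRingEnd ℂ) ((Real.cos (t / 2) : ℂ) *
      Complex.exp (-(Complex.I * ((fb + f : ℝ) : ℂ)) / 2))
      = (Real.cos (t / 2) : ℂ) * Complex.exp (Complex.I * ((fb + f : ℝ) : ℂ) / 2) := by
    rw [_root_.map_mul, Complex.conj_ofReal, conj_exp_I']
  have hcb : (starRingEnd ℂ) ((Real.sin (t / 2) : ℂ) *
      Complex.exp (Complex.I * ((f - fb : ℝ) : ℂ) / 2))
      = (Real.sin (t / 2) : ℂ) * Complex.exp (-(Complex.I * ((f - fb : ℝ) : ℂ)) / 2) := by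
    rw [_root_.map_mul, Complex.conj_ofReal, conj_exp_I]
  rw [hca, hcb, RZ, W, RY, RZ, Matrix.mul_fin_two, Matrix.mul_fin_two]
  ext i j
  fin_cases i <;> fin_cases j <;>
    simp only [Fin.mk_zero, Fin.mk_one, Matrix.of_apply, Matrix.cons_val',
      Matrix.cons_val_zero, Matrix.empty_val', Matrix.cons_val_fin_one,
      Matrix.cons_val_one, Matrix.head_cons, Matrix.head_fin_const]
  · rw [show -(Complex.I * ((fb + f : ℝ) : ℂ)) / 2
        = -(Complex.I * (fb : ℂ)) / 2 + -(Complex.I * (f : ℂ)) / 2 by push_cast; ring,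
      Complex.exp_add]
    ring
  · rw [show Complex.I * ((f - fb : ℝ) : ℂ) / 2
        = -(Complex.I * (fb : ℂ)) / 2 + Complex.I * (f : ℂ) / 2 by push_cast; ring,
      Complex.exp_add]
    ring
  · rw [show -(Complex.I * ((f - fb : ℝ) : ℂ)) / 2
        = Complex.I * (fb : ℂ) / 2 + -(Complex.I * (f : ℂ)) / 2 by push_cast; ring,
      Complex.exp_add]
    ring
  · rw [show Complex.I * ((fb + f : ℝ) : ℂ) / 2
        = Complex.I * (fb : ℂ) / 2 + Complex.I * (f : ℂ) / 2 by push_cast; ring,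
      Complex.exp_add]
    ring

lemma det_prod (L : ℕ) (x : ℝ) (θ' φ' : Fin L → ℝ) :
    (List.ofFn fun j : Fin L => RZ x * W (θ' j) (φ' j)).prod.det = 1 := by
  have h := map_list_prod (Matrix.detMonoidHom : Matrix (Fin 2) (Fin 2) ℂ →* ℂ)
    (List.ofFn fun j : Fin L => RZ x * W (θ' j) (φ' j))
  simp only [Matrix.coe_detMonoidHom] at h
  rw [h, List.map_ofFn]
  have : ∀ j : Fin L, (Matrix.det ∘ fun j : Fin L => RZ x * W (θ' j) (φ' j)) j = 1 := by
    intro j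
    simp [Function.comp, Matrix.det_mul, det_RZ, det_W]
  rw [funext this]
  simp

/-- the QNN `U = R_Z(φ) W(θ₀,φ₀) ∏_{j=1}^L R_Z(x) W(θ_j,φ_j)` has the form
`[[P, -Q],[Q*, P*]]` where `P, Q` are complex-coefficient Laurent polynomials in `e^{ix/2}`
of degree at most `L`, parity `L mod 2`, with `|P|² + |Q|² = 1` on ℝ. -/
theorem stmt2 (L : ℕ) (φbar : ℝ) (θ φ : Fin (L + 1) → ℝ) :
    ∃ p q : ℤ → ℂ,
      (∀ n : ℤ, (L : ℤ) < |n| → p n = 0) ∧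
      (∀ n : ℤ, (L : ℤ) < |n| → q n = 0) ∧
      (∀ n : ℤ, n % 2 ≠ (L : ℤ) % 2 → p n = 0) ∧
      (∀ n : ℤ, n % 2 ≠ (L : ℤ) % 2 → q n = 0) ∧
      (∀ x : ℝ,
        ‖∑ n ∈ Finset.Icc (-(L : ℤ)) (L : ℤ),
            p n * Complex.exp (Complex.I * (n : ℂ) * (x : ℂ) / 2)‖ ^ 2 +
        ‖∑ n ∈ Finset.Icc (-(L : ℤ)) (L : ℤ),
            q n * Complex.exp (Complex.I * (n : ℂ) * (x : ℂ) / 2)‖ ^ 2 = 1) ∧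
      (∀ x : ℝ,
        RZ φbar * W (θ 0) (φ 0) *
            (List.ofFn fun j : Fin L => RZ x * W (θ j.succ) (φ j.succ)).prod =
        !![(∑ n ∈ Finset.Icc (-(L : ℤ)) (L : ℤ),
              p n * Complex.exp (Complex.I * (n : ℂ) * (x : ℂ) / 2)),
           -(∑ n ∈ Finset.Icc (-(L : ℤ)) (L : ℤ),
              q n * Complex.exp (Complex.I * (n : ℂ) * (x : ℂ) / 2));
           (starRingEnd ℂ) (∑ n ∈ Finset.Icc (-(L : ℤ)) (L : ℤ),
              q n * Complex.exp (Complex.I * (n : ℂ) * (x : ℂ) / 2)),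
           (starRingEnd ℂ) (∑ n ∈ Finset.Icc (-(L : ℤ)) (L : ℤ),
              p n * Complex.exp (Complex.I * (n : ℂ) * (x : ℂ) / 2))]) := by
  obtain ⟨p, q, hp1, hq1, hp2, hq2, hU⟩ := key L (fun j => θ j.succ) (fun j => φ j.succ)
    ((Real.cos (θ 0 / 2) : ℂ) * Complex.exp (-(Complex.I * ((φbar + φ 0 : ℝ) : ℂ)) / 2))
    ((Real.sin (θ 0 / 2) : ℂ) * Complex.exp (Complex.I * ((φ 0 - φbar : ℝ) : ℂ) / 2))
  refine ⟨p, q, hp1, hq1, hp2, hq2, ?_, ?_⟩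
  · intro x
    have h := hU x
    rw [← baseA φbar (θ 0) (φ 0)] at h
    have hd := congrArg Matrix.det h
    rw [Matrix.det_mul, Matrix.det_mul, det_RZ, det_W, det_prod, one_mul, one_mul,
      Matrix.det_fin_two_of] at hd
    have h2 : Complex.normSq (Fa L p x) + Complex.normSq (Fa L q x) = 1 := by
      have h3 : ((Complex.normSq (Fa L p x) + Complex.normSq (Fa L q x) : ℝ) : ℂ) = 1 := by
        push_cast
        rw [← Complex.mul_conj, ← Complex.mul_conj]
        linear_combination -hd
      exact_mod_cast h3
    show ‖Fa L p x‖ ^ 2 + ‖Fa L q x‖ ^ 2 = 1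
    rw [Complex.sq_norm, Complex.sq_norm, h2]
  · intro x
    rw [baseA φbar (θ 0) (φ 0)]
    exact hU x
end

section
/- Let P, Q be Laurent polynomials in z = e^{ix/2} with complex coefficients such that deg(P) ≤ L, deg(Q) ≤ L, both have parity L mod 2, and |P(x)|² + |Q(x)|² = 1 for all real x. Then there exist real angles φ, θ₀, ..., θ_L and φ₀, ..., φ_L such that [[P(x), -Q(x)], [Q*(x), P*(x)]] = R_Z(φ) R_Y(θ₀) R_Z(φ₀) · ∏_{j=1}^{L} R_Z(x) R_Y(θ_j) R_Z(φ_j) for all real x. -/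
open Complex Matrix

open Finset

noncomputable def ee (n : ℤ) (x : ℝ) : ℂ := Complex.exp (Complex.I * n * x / 2)

lemma ee_mul (n m : ℤ) (x : ℝ) : ee n x * ee m x = ee (n + m) x := by
  rw [ee, ee, ee, ← Complex.exp_add]; congr 1; push_cast; ring

lemma conj_ee (n : ℤ) (x : ℝ) : (starRingEnd ℂ) (ee n x) = ee (-n) x := by
  rw [ee, ee, ← Complex.exp_conj]
  congr 1
  simp [map_ofNat]

lemma ee_zero (x : ℝ) : ee 0 x = 1 := by simp [ee]

lemma ee_ne_zero (n : ℤ) (x : ℝ) : ee n x ≠ 0 := Complex.exp_ne_zero _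

lemma exp_pow_eq_ee (x : ℝ) (k : ℕ) : Complex.exp (Complex.I * x / 2) ^ k = ee k x := by
  rw [← Complex.exp_nat_mul, ee]; congr 1; push_cast; ring

lemma fourier_unique (s : Finset ℤ) (c : ℤ → ℂ)
    (h : ∀ x : ℝ, ∑ n ∈ s, c n * ee n x = 0) : ∀ n ∈ s, c n = 0 := by
  intro n hn
  have hne : s.Nonempty := ⟨n, hn⟩
  set N : ℤ := s.min' hne with hN
  have hNle : ∀ m ∈ s, N ≤ m := fun m hm => Finset.min'_le s m hm
  set F : Polynomial ℂ := ∑ m ∈ s, Polynomial.monomial (m - N).toNat (c m) with hF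
  have heval : ∀ x : ℝ, F.eval (Complex.exp (Complex.I * x / 2)) = 0 := by
    intro x
    have h1 : F.eval (Complex.exp (Complex.I * x / 2)) = ∑ m ∈ s, c m * ee (m - N) x := by
      rw [hF, Polynomial.eval_finset_sum]
      refine Finset.sum_congr rfl fun m hm => ?_
      rw [Polynomial.eval_monomial, exp_pow_eq_ee]
      have := hNle m hm
      congr 2
      omega
    rw [h1]
    have h2 : ∀ m : ℤ, ee (m - N) x = ee m x * ee (-N) x := by
      intro m; rw [ee_mul, ← sub_eq_add_neg]
    simp_rw [h2, ← mul_assoc, ← Finset.sum_mul, h x, zero_mul]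
  have hFz : F = 0 := by
    apply Polynomial.eq_zero_of_infinite_isRoot
    have hsub : (fun x : ℝ => Complex.exp (Complex.I * x / 2)) '' Set.Ioo 0 (2 * Real.pi)
        ⊆ {z | F.IsRoot z} := by
      rintro z ⟨x, _, rfl⟩; exact heval x
    refine Set.Infinite.mono hsub ?_
    apply Set.Infinite.image
    · intro x hx y hy hxy
      simp only [Set.mem_Ioo] at hx hy
      have hxy' : Complex.exp (Complex.I * x / 2) = Complex.exp (Complex.I * y / 2) := hxy
      have h1 : Complex.exp (Complex.I * x / 2 - Complex.I * y / 2) = 1 := by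
        rw [Complex.exp_sub, hxy', div_self (Complex.exp_ne_zero _)]
      rw [Complex.exp_eq_one_iff] at h1
      obtain ⟨k, hk⟩ := h1
      have h2 : (x : ℂ) - y = k * (4 * Real.pi) := by
        linear_combination (-2*Complex.I) * hk + ((x:ℂ) - y - 4*Real.pi*k) * Complex.I_sq
      have h3 : x - y = k * (4 * Real.pi) := by exact_mod_cast h2
      have hπ := Real.pi_pos
      have hk0 : k = 0 := by
        rcases lt_trichotomy k 0 with hlt | heq | hgt
        · exfalso
          have hk1 : k ≤ -1 := by omega
          have : (k : ℝ) ≤ -1 := by exact_mod_cast hk1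
          nlinarith
        · exact heq
        · exfalso
          have hk1 : 1 ≤ k := by omega
          have : (1 : ℝ) ≤ (k : ℝ) := by exact_mod_cast hk1
          nlinarith
      rw [hk0] at h3
      simp at h3
      linarith
    · exact Set.infinite_coe_iff.mp (Set.Ioo.infinite (by linarith [Real.pi_pos]))
  have hco : F.coeff (n - N).toNat = c n := by
    rw [hF, Polynomial.finset_sum_coeff]
    rw [Finset.sum_eq_single_of_mem n hn]
    · simp [Polynomial.coeff_monomial]
    · intro m hm hmn
      rw [Polynomial.coeff_monomial, if_neg]
      have h1 := hNle m hm; have h2 := hNle n hn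
      omega
  rw [hFz] at hco
  simpa using hco.symm

lemma conv_eq (M : ℕ) (f : ℤ → ℂ) (hf : ∀ n : ℤ, (M:ℤ) < |n| → f n = 0) (x : ℝ) :
    (∑ n ∈ Icc (-(M:ℤ)) M, f n * ee n x) * (starRingEnd ℂ) (∑ m ∈ Icc (-(M:ℤ)) M, f m * ee m x)
    = ∑ k ∈ Icc (-(2*M:ℤ)) (2*M), (∑ n ∈ Icc (-(M:ℤ)) M, f n * (starRingEnd ℂ) (f (n - k))) * ee k x := by
  rw [map_sum, Finset.sum_mul_sum]
  simp_rw [Finset.sum_mul, _root_.map_mul, conj_ee]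
  conv_rhs => rw [Finset.sum_comm]
  refine Finset.sum_congr rfl fun n hn => ?_
  simp only [Finset.mem_Icc] at hn
  have hterm : ∀ m : ℤ, f n * ee n x * ((starRingEnd ℂ) (f m) * ee (-m) x)
      = f n * (starRingEnd ℂ) (f m) * ee (n - m) x := by
    intro m
    calc f n * ee n x * ((starRingEnd ℂ) (f m) * ee (-m) x)
        = f n * (starRingEnd ℂ) (f m) * (ee n x * ee (-m) x) := by ring
      _ = f n * (starRingEnd ℂ) (f m) * ee (n - m) x := by rw [ee_mul, ← sub_eq_add_neg]
  simp_rw [hterm]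
  have hsub : Finset.Icc (n - M) (n + M) ⊆ Finset.Icc (-(2*M:ℤ)) (2*M) := by
    intro k hk; simp only [Finset.mem_Icc] at hk ⊢; omega
  rw [← Finset.sum_subset hsub (by
    intro k hk hk'
    simp only [Finset.mem_Icc] at hk hk'
    have h0 : f (n - k) = 0 := hf _ (by rw [lt_abs]; omega)
    rw [h0]
    simp)]
  refine Finset.sum_nbij' (fun m => n - m) (fun k => n - k) ?_ ?_ ?_ ?_ ?_
  · intro m hm; simp only [Finset.mem_Icc] at hm ⊢; omega
  · intro k hk; simp only [Finset.mem_Icc] at hk ⊢; omega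
  · intro m _; omega
  · intro k _; omega
  · intro m hm
    have h0 : n - (n - m) = m := by omega
    rw [h0]

lemma norm_to_conj (z w : ℂ) (h : ‖z‖ ^ 2 + ‖w‖ ^ 2 = 1) :
    z * (starRingEnd ℂ) z + w * (starRingEnd ℂ) w = 1 := by
  rw [Complex.mul_conj, Complex.mul_conj]
  rw [← Complex.sq_norm, ← Complex.sq_norm]
  exact_mod_cast congrArg (Complex.ofReal) h

lemma conj_to_norm (z w : ℂ) (h : z * (starRingEnd ℂ) z + w * (starRingEnd ℂ) w = 1) :
    ‖z‖ ^ 2 + ‖w‖ ^ 2 = 1 := by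
  rw [Complex.mul_conj, Complex.mul_conj] at h
  rw [Complex.sq_norm, Complex.sq_norm]
  exact_mod_cast h

lemma orth (M : ℕ) (hM : 0 < M) (p q : ℤ → ℂ)
    (hpdeg : ∀ n : ℤ, (M:ℤ) < |n| → p n = 0) (hqdeg : ∀ n : ℤ, (M:ℤ) < |n| → q n = 0)
    (hnorm : ∀ x : ℝ, ‖∑ n ∈ Icc (-(M:ℤ)) M, p n * ee n x‖ ^ 2
      + ‖∑ n ∈ Icc (-(M:ℤ)) M, q n * ee n x‖ ^ 2 = 1) :
    p M * (starRingEnd ℂ) (p (-(M:ℤ))) + q M * (starRingEnd ℂ) (q (-(M:ℤ))) = 0 := by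
  set c : ℤ → ℂ := fun k =>
    (∑ n ∈ Icc (-(M:ℤ)) M, (p n * (starRingEnd ℂ) (p (n - k)) + q n * (starRingEnd ℂ) (q (n - k))))
      - (if k = 0 then 1 else 0) with hc
  have hzero : ∀ x : ℝ, ∑ k ∈ Icc (-(2*M:ℤ)) (2*M), c k * ee k x = 0 := by
    intro x
    have h1 := conv_eq M p hpdeg x
    have h2 := conv_eq M q hqdeg x
    have h3 := norm_to_conj _ _ (hnorm x)
    have hite : (∑ k ∈ Icc (-(2*M:ℤ)) (2*M), (if k = 0 then (1:ℂ) else 0) * ee k x) = 1 := by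
      rw [Finset.sum_eq_single_of_mem 0 (by simp only [Finset.mem_Icc]; omega)
        (by intro k _ hk; simp [hk])]
      simp [ee_zero]
    simp only [hc, sub_mul, Finset.sum_sub_distrib, add_mul, Finset.sum_add_distrib]
    rw [← h1, ← h2, hite, h3, sub_self]
  have h2M := fourier_unique _ c hzero (2*M) (by simp only [Finset.mem_Icc]; omega)
  rw [hc] at h2M
  simp only at h2M
  rw [if_neg (show (2*(M:ℤ)) ≠ 0 by omega), sub_zero] at h2M
  rw [Finset.sum_eq_single_of_mem (M:ℤ) (by simp only [Finset.mem_Icc]; omega)] at h2M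
  · rw [show (M:ℤ) - 2*M = -(M:ℤ) by ring] at h2M
    exact h2M
  · intro n hn hne
    simp only [Finset.mem_Icc] at hn
    rw [hpdeg (n - 2*M) (by rw [lt_abs]; omega), hqdeg (n - 2*M) (by rw [lt_abs]; omega)]
    simp

lemma exp_merge (r : ℝ) (u v w : ℂ) (h : u + v = w) :
    Complex.exp u * (r : ℂ) * Complex.exp v = (r : ℂ) * Complex.exp w := by
  rw [← h, Complex.exp_add]; ring

lemma exp_merge_neg (r : ℝ) (u v w : ℂ) (h : u + v = w) :
    Complex.exp u * -(r : ℂ) * Complex.exp v = -((r : ℂ) * Complex.exp w) := by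
  rw [← h, Complex.exp_add]; ring

lemma euler (a b : ℂ) (h : ‖a‖ ^ 2 + ‖b‖ ^ 2 = 1) :
    ∃ θ φ₁ φ₂ : ℝ, !![a, -b; (starRingEnd ℂ) b, (starRingEnd ℂ) a] = RZ φ₁ * RY θ * RZ φ₂ := by
  have hb1 : ‖b‖ ≤ 1 := by nlinarith [norm_nonneg a, norm_nonneg b]
  refine ⟨2 * Real.arcsin (‖b‖), -(a.arg + b.arg), -a.arg + b.arg, ?_⟩
  have hcos : Real.cos (2 * Real.arcsin (‖b‖) / 2) = ‖a‖ := by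
    rw [mul_div_cancel_left₀ _ (two_ne_zero), Real.cos_arcsin]
    rw [show 1 - ‖b‖ ^ 2 = ‖a‖ ^ 2 by linarith]
    exact Real.sqrt_sq (norm_nonneg a)
  have hsin : Real.sin (2 * Real.arcsin (‖b‖) / 2) = ‖b‖ := by
    rw [mul_div_cancel_left₀ _ (two_ne_zero), Real.sin_arcsin (by linarith [norm_nonneg b]) hb1]
  rw [RZ, RZ, RY, hcos, hsin]
  have ha' := Complex.norm_mul_exp_arg_mul_I a
  have hb' := Complex.norm_mul_exp_arg_mul_I b
  have hconj : ∀ z : ℂ, (starRingEnd ℂ) z = (‖z‖ : ℂ) * Complex.exp (-z.arg * Complex.I) := by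
    intro z
    conv_lhs => rw [← Complex.norm_mul_exp_arg_mul_I z]
    rw [_root_.map_mul, ← Complex.exp_conj, Complex.conj_ofReal]
    congr 2
    simp
  rw [Matrix.mul_fin_two, Matrix.mul_fin_two]
  ext i j
  fin_cases i <;> fin_cases j <;>
    simp only [Matrix.cons_val', Matrix.cons_val_zero, Matrix.cons_val_one, Matrix.head_cons,
      Matrix.empty_val', Matrix.cons_val_fin_one, Matrix.head_fin_const, Matrix.of_apply,
      Fin.zero_eta, Fin.mk_one, Matrix.cons_val_fin_one, Matrix.head_fin_const, zero_mul, mul_zero, add_zero, zero_add, mul_one]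
  · rw [exp_merge (‖a‖) _ _ (↑a.arg * Complex.I) (by push_cast; ring)]
    exact ha'.symm
  · rw [exp_merge_neg (‖b‖) _ _ (↑b.arg * Complex.I) (by push_cast; ring)]
    rw [hb']
  · rw [exp_merge (‖b‖) _ _ (-↑b.arg * Complex.I) (by push_cast; ring)]
    exact hconj b
  · rw [exp_merge (‖a‖) _ _ (-↑a.arg * Complex.I) (by push_cast; ring)]
    exact hconj a

lemma polar_aux (r ρ α β : ℝ) :
    Complex.exp (-(Complex.I * ((α : ℂ) + (β : ℂ))) / 2) / (r : ℂ) *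
      ((ρ : ℂ) * Complex.exp ((α : ℂ) * Complex.I))
    = ((ρ / r : ℝ) : ℂ) * Complex.exp (Complex.I * ((α : ℂ) - (β : ℂ)) / 2) := by
  have h : -(Complex.I * ((α : ℂ) + (β : ℂ))) / 2 + (α : ℂ) * Complex.I
      = Complex.I * ((α : ℂ) - (β : ℂ)) / 2 := by ring
  rw [← h, Complex.exp_add]
  push_cast
  ring

lemma polar_aux' (r ρ α β : ℝ) :
    Complex.exp (-(Complex.I * ((α : ℂ) + (β : ℂ))) / 2) / (r : ℂ) *
      ((ρ : ℂ) * Complex.exp ((β : ℂ) * Complex.I))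
    = ((ρ / r : ℝ) : ℂ) * Complex.exp (-(Complex.I * ((α : ℂ) - (β : ℂ))) / 2) := by
  have h : -(Complex.I * ((α : ℂ) + (β : ℂ))) / 2 + (β : ℂ) * Complex.I
      = -(Complex.I * ((α : ℂ) - (β : ℂ))) / 2 := by ring
  rw [← h, Complex.exp_add]
  push_cast
  ring

lemma polar2 (a₀ b₀ : ℂ) (h : ¬(a₀ = 0 ∧ b₀ = 0)) :
    ∃ (θ φ : ℝ) (c : ℂ),
      c * a₀ = (Real.cos (θ / 2) : ℂ) * Complex.exp (Complex.I * φ / 2) ∧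
      c * b₀ = (Real.sin (θ / 2) : ℂ) * Complex.exp (-(Complex.I * φ) / 2) := by
  set r : ℝ := Real.sqrt (‖a₀‖ ^ 2 + ‖b₀‖ ^ 2) with hr
  have hr2 : r ^ 2 = ‖a₀‖ ^ 2 + ‖b₀‖ ^ 2 := by
    rw [hr, Real.sq_sqrt]; positivity
  have hrpos : 0 < r := by
    rw [hr]
    apply Real.sqrt_pos.mpr
    rcases (not_and_or.mp h) with h' | h'
    · have := norm_pos_iff.mpr h'; positivity
    · have := norm_pos_iff.mpr h'; positivity
  have hcos : Real.cos (2 * Real.arcsin (‖b₀‖ / r) / 2) = ‖a₀‖ / r := by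
    rw [mul_div_cancel_left₀ _ (two_ne_zero), Real.cos_arcsin]
    rw [show 1 - (‖b₀‖ / r) ^ 2 = (‖a₀‖ / r) ^ 2 by
      field_simp; nlinarith]
    exact Real.sqrt_sq (by positivity)
  have hsin : Real.sin (2 * Real.arcsin (‖b₀‖ / r) / 2) = ‖b₀‖ / r := by
    rw [mul_div_cancel_left₀ _ (two_ne_zero), Real.sin_arcsin]
    · have h0 : (0:ℝ) ≤ ‖b₀‖ / r := by positivity
      linarith
    · rw [div_le_one hrpos]
      nlinarith [norm_nonneg a₀, hr2, norm_nonneg b₀, hrpos]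
  refine ⟨2 * Real.arcsin (‖b₀‖ / r), a₀.arg - b₀.arg,
    Complex.exp (-(Complex.I * ((a₀.arg : ℂ) + (b₀.arg : ℂ))) / 2) / (r : ℂ), ?_, ?_⟩
  · calc Complex.exp (-(Complex.I * ((a₀.arg : ℂ) + (b₀.arg : ℂ))) / 2) / (r : ℂ) * a₀
        = Complex.exp (-(Complex.I * ((a₀.arg : ℂ) + (b₀.arg : ℂ))) / 2) / (r : ℂ) *
          ((‖a₀‖ : ℂ) * Complex.exp ((a₀.arg : ℂ) * Complex.I)) := by
          rw [Complex.norm_mul_exp_arg_mul_I]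
      _ = ((‖a₀‖ / r : ℝ) : ℂ) *
          Complex.exp (Complex.I * ((a₀.arg : ℂ) - (b₀.arg : ℂ)) / 2) := polar_aux r _ _ _
      _ = (Real.cos (2 * Real.arcsin (‖b₀‖ / r) / 2) : ℂ) *
          Complex.exp (Complex.I * ((a₀.arg - b₀.arg : ℝ) : ℂ) / 2) := by
          rw [hcos]; push_cast; ring
  · calc Complex.exp (-(Complex.I * ((a₀.arg : ℂ) + (b₀.arg : ℂ))) / 2) / (r : ℂ) * b₀
        = Complex.exp (-(Complex.I * ((a₀.arg : ℂ) + (b₀.arg : ℂ))) / 2) / (r : ℂ) *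
          ((‖b₀‖ : ℂ) * Complex.exp ((b₀.arg : ℂ) * Complex.I)) := by
          rw [Complex.norm_mul_exp_arg_mul_I]
      _ = ((‖b₀‖ / r : ℝ) : ℂ) *
          Complex.exp (-(Complex.I * ((a₀.arg : ℂ) - (b₀.arg : ℂ))) / 2) := polar_aux' r _ _ _
      _ = (Real.sin (2 * Real.arcsin (‖b₀‖ / r) / 2) : ℂ) *
          Complex.exp (-(Complex.I * ((a₀.arg - b₀.arg : ℝ) : ℂ)) / 2) := by
          rw [hsin]; push_cast; ring


lemma main_ind : ∀ (L : ℕ) (p q : ℤ → ℂ),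
    (∀ n : ℤ, (L:ℤ) < |n| → p n = 0) → (∀ n : ℤ, (L:ℤ) < |n| → q n = 0) →
    (∀ n : ℤ, n % 2 ≠ (L:ℤ) % 2 → p n = 0) → (∀ n : ℤ, n % 2 ≠ (L:ℤ) % 2 → q n = 0) →
    (∀ x : ℝ, ‖∑ n ∈ Icc (-(L:ℤ)) L, p n * ee n x‖ ^ 2
      + ‖∑ n ∈ Icc (-(L:ℤ)) L, q n * ee n x‖ ^ 2 = 1) →
    ∃ (φbar : ℝ) (θ φ : Fin (L + 1) → ℝ), ∀ x : ℝ,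
      !![∑ n ∈ Icc (-(L:ℤ)) L, p n * ee n x, -∑ n ∈ Icc (-(L:ℤ)) L, q n * ee n x;
         (starRingEnd ℂ) (∑ n ∈ Icc (-(L:ℤ)) L, q n * ee n x),
         (starRingEnd ℂ) (∑ n ∈ Icc (-(L:ℤ)) L, p n * ee n x)] =
      RZ φbar * RY (θ 0) * RZ (φ 0) *
        (List.ofFn fun j : Fin L => RZ x * RY (θ j.succ) * RZ (φ j.succ)).prod := by
  intro L
  induction L with
  | zero =>
    intro p q _ _ _ _ hnorm
    have hs : ∀ (f : ℤ → ℂ) (x : ℝ),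
        (∑ n ∈ Icc (-((0:ℕ):ℤ)) ((0:ℕ):ℤ), f n * ee n x) = f 0 := by
      intro f x
      rw [show (-((0:ℕ):ℤ)) = 0 by simp, show ((0:ℕ):ℤ) = 0 by simp, Finset.Icc_self,
        Finset.sum_singleton, ee_zero, mul_one]
    obtain ⟨θ0, φ1, φ2, heu⟩ := euler (p 0) (q 0) (by
      have h := hnorm 0
      rwa [hs p 0, hs q 0] at h)
    refine ⟨φ1, fun _ => θ0, fun _ => φ2, fun x => ?_⟩
    rw [hs p x, hs q x]
    simpa using heu
  | succ L IH =>
    intro p q hpdeg hqdeg hppar hqpar hnorm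
    have horth := orth (L+1) (by omega) p q hpdeg hqdeg hnorm
    -- choose kernel vector
    obtain ⟨a₀, b₀, hne, hc1, hc2⟩ : ∃ a₀ b₀ : ℂ, ¬(a₀ = 0 ∧ b₀ = 0) ∧
        a₀ * p ((L+1:ℕ):ℤ) + b₀ * q ((L+1:ℕ):ℤ) = 0 ∧
        (starRingEnd ℂ) b₀ * p (-((L+1:ℕ):ℤ)) - (starRingEnd ℂ) a₀ * q (-((L+1:ℕ):ℤ)) = 0 := by
      by_cases hAB : p ((L+1:ℕ):ℤ) = 0 ∧ q ((L+1:ℕ):ℤ) = 0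
      · by_cases hCD : p (-((L+1:ℕ):ℤ)) = 0 ∧ q (-((L+1:ℕ):ℤ)) = 0
        · exact ⟨1, 0, by simp, by rw [hAB.1, hAB.2]; ring, by rw [hCD.2]; simp⟩
        · refine ⟨(starRingEnd ℂ) (p (-((L+1:ℕ):ℤ))), (starRingEnd ℂ) (q (-((L+1:ℕ):ℤ))),
            ?_, by rw [hAB.1, hAB.2]; ring, by rw [Complex.conj_conj, Complex.conj_conj]; ring⟩
          intro ⟨h1, h2⟩
          exact hCD ⟨by simpa using congrArg (starRingEnd ℂ) h1,
            by simpa using congrArg (starRingEnd ℂ) h2⟩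
      · have horth' : (starRingEnd ℂ) (p ((L+1:ℕ):ℤ)) * p (-((L+1:ℕ):ℤ))
            + (starRingEnd ℂ) (q ((L+1:ℕ):ℤ)) * q (-((L+1:ℕ):ℤ)) = 0 := by
          have h := congrArg (starRingEnd ℂ) horth
          simpa [_root_.map_mul] using h
        refine ⟨q ((L+1:ℕ):ℤ), -(p ((L+1:ℕ):ℤ)), ?_, by ring, ?_⟩
        · intro ⟨h1, h2⟩; exact hAB ⟨by simpa using h2, h1⟩
        · rw [map_neg]
          linear_combination -horth'
    obtain ⟨θL, φL, cc, hca, hcb⟩ := polar2 a₀ b₀ hne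
    set aa : ℂ := (Real.cos (θL / 2) : ℂ) * Complex.exp (Complex.I * φL / 2) with haa
    set bb : ℂ := (Real.sin (θL / 2) : ℂ) * Complex.exp (-(Complex.I * φL) / 2) with hbb
    have hconj_aa : (starRingEnd ℂ) aa
        = (Real.cos (θL / 2) : ℂ) * Complex.exp (-(Complex.I * φL) / 2) := by
      rw [haa, _root_.map_mul, Complex.conj_ofReal, ← Complex.exp_conj]
      congr 2
      simp [map_ofNat]
    have hconj_bb : (starRingEnd ℂ) bb
        = (Real.sin (θL / 2) : ℂ) * Complex.exp (Complex.I * φL / 2) := by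
      rw [hbb, _root_.map_mul, Complex.conj_ofReal, ← Complex.exp_conj]
      congr 2
      simp [map_ofNat]
    have hUn : aa * (starRingEnd ℂ) aa + bb * (starRingEnd ℂ) bb = 1 := by
      rw [hconj_aa, hconj_bb, haa, hbb]
      have e1 : Complex.exp (Complex.I * φL / 2) * Complex.exp (-(Complex.I * φL) / 2) = 1 := by
        rw [← Complex.exp_add, show Complex.I * φL / 2 + -(Complex.I * φL) / 2 = 0 by ring,
          Complex.exp_zero]
      have e2 : ((Real.cos (θL / 2) : ℂ))^2 + ((Real.sin (θL / 2) : ℂ))^2 = 1 := by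
        have := Real.cos_sq_add_sin_sq (θL / 2)
        exact_mod_cast congrArg (Complex.ofReal) this
      linear_combination (((Real.cos (θL / 2) : ℂ))^2 + ((Real.sin (θL / 2) : ℂ))^2) * e1 + e2
    have cond1 : aa * p ((L+1:ℕ):ℤ) + bb * q ((L+1:ℕ):ℤ) = 0 := by
      rw [← hca, ← hcb]
      linear_combination cc * hc1
    have cond2 : (starRingEnd ℂ) bb * p (-((L+1:ℕ):ℤ))
        - (starRingEnd ℂ) aa * q (-((L+1:ℕ):ℤ)) = 0 := by
      have h1 : (starRingEnd ℂ) cc * (starRingEnd ℂ) b₀ = (starRingEnd ℂ) bb := by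
        rw [← _root_.map_mul, hcb]
      have h2 : (starRingEnd ℂ) cc * (starRingEnd ℂ) a₀ = (starRingEnd ℂ) aa := by
        rw [← _root_.map_mul, hca]
      rw [← h1, ← h2]
      linear_combination (starRingEnd ℂ) cc * hc2
    -- new coefficient sequences
    set p' : ℤ → ℂ := fun n => aa * p (n - 1) + bb * q (n - 1) with hp'
    set q' : ℤ → ℂ := fun n =>
      (starRingEnd ℂ) aa * q (n + 1) - (starRingEnd ℂ) bb * p (n + 1) with hq'
    have hpdeg' : ∀ n : ℤ, (L:ℤ) < |n| → p' n = 0 := by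
      intro n hn
      have hn' := lt_abs.mp hn
      rw [hp']
      dsimp only
      rcases eq_or_ne n ((L:ℤ)+1) with rfl | h1
      · rw [show (L:ℤ)+1-1 = (L:ℤ) by ring, hppar (L:ℤ) (by omega), hqpar (L:ℤ) (by omega)]
        ring
      rcases eq_or_ne n ((L:ℤ)+2) with rfl | h2
      · rw [show (L:ℤ)+2-1 = ((L+1:ℕ):ℤ) by push_cast; ring]
        exact cond1
      · rw [hpdeg (n-1) (by rw [lt_abs]; omega), hqdeg (n-1) (by rw [lt_abs]; omega)]
        ring
    have hqdeg' : ∀ n : ℤ, (L:ℤ) < |n| → q' n = 0 := by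
      intro n hn
      have hn' := lt_abs.mp hn
      rw [hq']
      dsimp only
      rcases eq_or_ne n (-(L:ℤ)-1) with rfl | h1
      · rw [show -(L:ℤ)-1+1 = -(L:ℤ) by ring, hppar (-(L:ℤ)) (by omega),
          hqpar (-(L:ℤ)) (by omega)]
        ring
      rcases eq_or_ne n (-(L:ℤ)-2) with rfl | h2
      · rw [show -(L:ℤ)-2+1 = -((L+1:ℕ):ℤ) by push_cast; ring]
        linear_combination -cond2
      · rw [hpdeg (n+1) (by rw [lt_abs]; omega), hqdeg (n+1) (by rw [lt_abs]; omega)]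
        ring
    have hppar' : ∀ n : ℤ, n % 2 ≠ (L:ℤ) % 2 → p' n = 0 := by
      intro n hn
      rw [hp']
      dsimp only
      rw [hppar (n-1) (by omega), hqpar (n-1) (by omega)]
      ring
    have hqpar' : ∀ n : ℤ, n % 2 ≠ (L:ℤ) % 2 → q' n = 0 := by
      intro n hn
      rw [hq']
      dsimp only
      rw [hppar (n+1) (by omega), hqpar (n+1) (by omega)]
      ring
    -- sum identities
    have hPsum : ∀ x : ℝ, (∑ n ∈ Icc (-(L:ℤ)) L, p' n * ee n x)
        = ee 1 x * (aa * (∑ n ∈ Icc (-((L+1:ℕ):ℤ)) ((L+1:ℕ):ℤ), p n * ee n x)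
          + bb * (∑ n ∈ Icc (-((L+1:ℕ):ℤ)) ((L+1:ℕ):ℤ), q n * ee n x)) := by
      intro x
      rw [mul_add]
      simp_rw [Finset.mul_sum]
      rw [← Finset.sum_add_distrib]
      have hterm : ∀ m : ℤ, ee 1 x * (aa * (p m * ee m x)) + ee 1 x * (bb * (q m * ee m x))
          = p' (m + 1) * ee (m + 1) x := by
        intro m
        rw [hp']
        dsimp only
        rw [show m + 1 - 1 = m by ring, show ee (m+1) x = ee 1 x * ee m x by
          rw [ee_mul, add_comm]]
        ring
      rw [Finset.sum_congr rfl fun m _ => hterm m]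
      rw [show (∑ m ∈ Icc (-((L+1:ℕ):ℤ)) ((L+1:ℕ):ℤ), p' (m+1) * ee (m+1) x)
          = ∑ n ∈ Icc (-((L+1:ℕ):ℤ)+1) (((L+1:ℕ):ℤ)+1), p' n * ee n x from
        Finset.sum_nbij' (fun m => m + 1) (fun n => n - 1)
          (by intro m hm; simp only [Finset.mem_Icc] at hm ⊢; omega)
          (by intro n hn; simp only [Finset.mem_Icc] at hn ⊢; omega)
          (by intro m _; omega) (by intro n _; omega)
          (by intro m _; rfl)]
      apply Finset.sum_subset
      · intro n hn; simp only [Finset.mem_Icc] at hn ⊢; omega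
      · intro n hn hn'
        simp only [Finset.mem_Icc] at hn hn'
        rw [hpdeg' n (by rw [lt_abs]; omega)]
        ring
    have hQsum : ∀ x : ℝ, (∑ n ∈ Icc (-(L:ℤ)) L, q' n * ee n x)
        = ee (-1) x * ((starRingEnd ℂ) aa * (∑ n ∈ Icc (-((L+1:ℕ):ℤ)) ((L+1:ℕ):ℤ), q n * ee n x)
          - (starRingEnd ℂ) bb * (∑ n ∈ Icc (-((L+1:ℕ):ℤ)) ((L+1:ℕ):ℤ), p n * ee n x)) := by
      intro x
      rw [mul_sub]
      simp_rw [Finset.mul_sum]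
      rw [← Finset.sum_sub_distrib]
      have hterm : ∀ m : ℤ, ee (-1) x * ((starRingEnd ℂ) aa * (q m * ee m x))
            - ee (-1) x * ((starRingEnd ℂ) bb * (p m * ee m x))
          = q' (m - 1) * ee (m - 1) x := by
        intro m
        rw [hq']
        dsimp only
        rw [show m - 1 + 1 = m by ring, show ee (m-1) x = ee (-1) x * ee m x by
          rw [ee_mul, show (-1) + m = m - 1 by ring]]
        ring
      rw [Finset.sum_congr rfl fun m _ => hterm m]
      rw [show (∑ m ∈ Icc (-((L+1:ℕ):ℤ)) ((L+1:ℕ):ℤ), q' (m-1) * ee (m-1) x)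
          = ∑ n ∈ Icc (-((L+1:ℕ):ℤ)-1) (((L+1:ℕ):ℤ)-1), q' n * ee n x from
        Finset.sum_nbij' (fun m => m - 1) (fun n => n + 1)
          (by intro m hm; simp only [Finset.mem_Icc] at hm ⊢; omega)
          (by intro n hn; simp only [Finset.mem_Icc] at hn ⊢; omega)
          (by intro m _; omega) (by intro n _; omega)
          (by intro m _; rfl)]
      apply Finset.sum_subset
      · intro n hn; simp only [Finset.mem_Icc] at hn ⊢; omega
      · intro n hn hn'
        simp only [Finset.mem_Icc] at hn hn'
        rw [hqdeg' n (by rw [lt_abs]; omega)]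
        ring
    -- norm hypothesis for IH
    have hz : ∀ x : ℝ, ee 1 x * ee (-1) x = 1 := by
      intro x
      rw [ee_mul, show (1:ℤ) + (-1) = 0 by ring, ee_zero]
    have hnorm' : ∀ x : ℝ, ‖∑ n ∈ Icc (-(L:ℤ)) L, p' n * ee n x‖ ^ 2
        + ‖∑ n ∈ Icc (-(L:ℤ)) L, q' n * ee n x‖ ^ 2 = 1 := by
      intro x
      apply conj_to_norm
      rw [hPsum x, hQsum x]
      have h3 := norm_to_conj _ _ (hnorm x)
      set Px := ∑ n ∈ Icc (-((L+1:ℕ):ℤ)) ((L+1:ℕ):ℤ), p n * ee n x with hPx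
      set Qx := ∑ n ∈ Icc (-((L+1:ℕ):ℤ)) ((L+1:ℕ):ℤ), q n * ee n x with hQx
      simp only [_root_.map_mul, map_add, map_sub, conj_ee, Complex.conj_conj, neg_neg]
      linear_combination (aa * (starRingEnd ℂ) aa + bb * (starRingEnd ℂ) bb)
          * (Px * (starRingEnd ℂ) Px + Qx * (starRingEnd ℂ) Qx) * hz x
        + (Px * (starRingEnd ℂ) Px + Qx * (starRingEnd ℂ) Qx) * hUn + h3
    obtain ⟨φbar, θv, φv, hIH⟩ := IH p' q' hpdeg' hqdeg' hppar' hqpar' hnorm'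
    refine ⟨φbar, Fin.snoc θv θL, Fin.snoc φv φL, fun x => ?_⟩
    have h0θ : (Fin.snoc θv θL : Fin (L+2) → ℝ) 0 = θv 0 := by
      rw [← Fin.castSucc_zero, Fin.snoc_castSucc]
    have h0φ : (Fin.snoc φv φL : Fin (L+2) → ℝ) 0 = φv 0 := by
      rw [← Fin.castSucc_zero, Fin.snoc_castSucc]
    have hlist : List.ofFn (fun j : Fin (L+1) =>
          RZ x * RY ((Fin.snoc θv θL : Fin (L+2) → ℝ) j.succ) * RZ ((Fin.snoc φv φL : Fin (L+2) → ℝ) j.succ))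
        = (List.ofFn fun j : Fin L =>
            RZ x * RY (θv j.succ) * RZ (φv j.succ)).concat (RZ x * RY θL * RZ φL) := by
      rw [List.ofFn_succ']
      simp only [Fin.succ_castSucc, Fin.snoc_castSucc, Fin.succ_last, Fin.snoc_last]
    rw [h0θ, h0φ, hlist, List.prod_concat, ← mul_assoc, ← hIH x]
    -- the one-step matrix identity
    have hex1 : ee (-1) x = Complex.exp (-(Complex.I * x) / 2) := by
      rw [ee]; congr 1; push_cast; ring
    have hex2 : ee 1 x = Complex.exp (Complex.I * x / 2) := by
      rw [ee]; congr 1; push_cast; ring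
    have hM : RZ x * RY θL * RZ φL
        = !![(starRingEnd ℂ) aa * ee (-1) x, -((starRingEnd ℂ) bb * ee (-1) x);
             bb * ee 1 x, aa * ee 1 x] := by
      rw [RZ, RY, RZ, Matrix.mul_fin_two, Matrix.mul_fin_two,
        hconj_aa, hconj_bb, haa, hbb, hex1, hex2]
      congr 1 <;> ring
    rw [hM]
    rw [show (!![∑ n ∈ Icc (-(L:ℤ)) L, p' n * ee n x, -∑ n ∈ Icc (-(L:ℤ)) L, q' n * ee n x;
         (starRingEnd ℂ) (∑ n ∈ Icc (-(L:ℤ)) L, q' n * ee n x),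
         (starRingEnd ℂ) (∑ n ∈ Icc (-(L:ℤ)) L, p' n * ee n x)] *
        !![(starRingEnd ℂ) aa * ee (-1) x, -((starRingEnd ℂ) bb * ee (-1) x);
           bb * ee 1 x, aa * ee 1 x]) = _ from Matrix.mul_fin_two _ _ _ _ _ _ _ _]
    set Px := ∑ n ∈ Icc (-((L+1:ℕ):ℤ)) ((L+1:ℕ):ℤ), p n * ee n x with hPx
    set Qx := ∑ n ∈ Icc (-((L+1:ℕ):ℤ)) ((L+1:ℕ):ℤ), q n * ee n x with hQx
    ext i j
    fin_cases i <;> fin_cases j <;>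
      simp only [Matrix.cons_val', Matrix.cons_val_zero, Matrix.cons_val_one, Matrix.head_cons,
        Matrix.empty_val', Matrix.cons_val_fin_one, Matrix.head_fin_const, Matrix.of_apply,
        Fin.zero_eta, Fin.mk_one]
    · rw [hPsum x, hQsum x]
      linear_combination (-(aa * (starRingEnd ℂ) aa + bb * (starRingEnd ℂ) bb) * Px) * hz x
        + (-Px) * hUn
    · rw [hPsum x, hQsum x]
      linear_combination ((aa * (starRingEnd ℂ) aa + bb * (starRingEnd ℂ) bb) * Qx) * hz x
        + Qx * hUn
    · rw [hPsum x, hQsum x]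
      simp only [_root_.map_mul, map_add, map_sub, conj_ee, Complex.conj_conj, neg_neg]
      linear_combination (-(aa * (starRingEnd ℂ) aa + bb * (starRingEnd ℂ) bb)
          * (starRingEnd ℂ) Qx) * hz x + (-((starRingEnd ℂ) Qx)) * hUn
    · rw [hPsum x, hQsum x]
      simp only [_root_.map_mul, map_add, map_sub, conj_ee, Complex.conj_conj, neg_neg]
      linear_combination (-(aa * (starRingEnd ℂ) aa + bb * (starRingEnd ℂ) bb)
          * (starRingEnd ℂ) Px) * hz x + (-((starRingEnd ℂ) Px)) * hUn


/-- complex-coefficient Laurent polynomials `P, Q` in `e^{ix/2}` with degree at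
most `L`, parity `L mod 2` and `|P|² + |Q|² = 1` on ℝ arise from a QNN
`R_Z(φ) R_Y(θ₀) R_Z(φ₀) ∏_{j=1}^L R_Z(x) R_Y(θ_j) R_Z(φ_j)`. -/
theorem stmt3 (L : ℕ) (p q : ℤ → ℂ) (P Q : ℝ → ℂ)
    (hP : ∀ x : ℝ, P x = ∑ n ∈ Finset.Icc (-(L : ℤ)) (L : ℤ),
        p n * Complex.exp (Complex.I * (n : ℂ) * (x : ℂ) / 2))
    (hQ : ∀ x : ℝ, Q x = ∑ n ∈ Finset.Icc (-(L : ℤ)) (L : ℤ),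
        q n * Complex.exp (Complex.I * (n : ℂ) * (x : ℂ) / 2))
    (hpdeg : ∀ n : ℤ, (L : ℤ) < |n| → p n = 0)
    (hqdeg : ∀ n : ℤ, (L : ℤ) < |n| → q n = 0)
    (hppar : ∀ n : ℤ, n % 2 ≠ (L : ℤ) % 2 → p n = 0)
    (hqpar : ∀ n : ℤ, n % 2 ≠ (L : ℤ) % 2 → q n = 0)
    (hnorm : ∀ x : ℝ, ‖P x‖ ^ 2 + ‖Q x‖ ^ 2 = 1) :
    ∃ (φbar : ℝ) (θ φ : Fin (L + 1) → ℝ), ∀ x : ℝ,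
      !![P x, -Q x; (starRingEnd ℂ) (Q x), (starRingEnd ℂ) (P x)] =
      RZ φbar * RY (θ 0) * RZ (φ 0) *
        (List.ofFn fun j : Fin L => RZ x * RY (θ j.succ) * RZ (φ j.succ)).prod := by
  obtain ⟨φbar, θ, φ, h⟩ := main_ind L p q hpdeg hqdeg hppar hqpar (by
    intro x
    have hx := hnorm x
    rw [hP x, hQ x] at hx
    exact hx)
  refine ⟨φbar, θ, φ, fun x => ?_⟩
  rw [hP x, hQ x]
  exact h x
end
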